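/- Suppose (Z, T) is independent of (W, C), β = P(T ≥ W) > 0, t1 < t2 are reals with g(s) > 0 for all s ∈ [t1, t2), P(t1 ≤ T < t2) > 0, and 0 < q < 1. If m0 is a q-th conditional quantile of the marker, i.e. P(Z ≤ m0 | t1 ≤ T < t2) = q, then the population percentile estimating function vanishes at m0: E[(S(X)/G(X)) · Δ · 1{t1 ≤ X < t2} · (1{Z ≤ m0} − q) | T ≥ W] = 0. -/

import Mathlib

open MeasureTheory ProbabilityTheory

lemma null_of_selfIci {Ω : Type*} [MeasurableSpace Ω] (μ : Measure Ω) [IsProbabilityMeasure μ]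
    (T : Ω → ℝ) : μ {ω | μ {ω' | T ω ≤ T ω'} = 0} = 0 := by
  classical
  set E : Set ℝ := {t : ℝ | μ {ω | t ≤ T ω} = 0} with hE
  have hup : ∀ t ∈ E, ∀ t', t ≤ t' → t' ∈ E := by
    intro t ht t' htt'
    exact measure_mono_null (fun ω hω => le_trans htt' hω) ht
  have hex : ∃ t₀ : ℝ, t₀ ∉ E := by
    by_contra hcon
    push_neg at hcon
    have huniv : (Set.univ : Set Ω) ⊆ ⋃ n : ℕ, {ω | -(n : ℝ) ≤ T ω} := by
      intro ω _
      obtain ⟨n, hn⟩ := exists_nat_ge (-(T ω))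
      exact Set.mem_iUnion.2 ⟨n, by simp only [Set.mem_setOf_eq]; linarith⟩
    have h0 : μ (Set.univ : Set Ω) = 0 :=
      measure_mono_null huniv (measure_iUnion_null fun n => hcon _)
    simp at h0
  obtain ⟨t₀, ht₀⟩ := hex
  rcases Set.eq_empty_or_nonempty E with hEe | hEne
  · refine measure_mono_null (fun ω hω => ?_) (measure_empty (μ := μ))
    have : T ω ∈ E := hω
    rw [hEe] at this
    exact this
  · have hbdd : BddBelow E := ⟨t₀, fun e he => by
      by_contra hlt
      push_neg at hlt
      exact ht₀ (hup e he t₀ hlt.le)⟩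
    set c := sInf E with hc
    by_cases hcE : μ {ω | c ≤ T ω} = 0
    · exact measure_mono_null (fun ω hω => csInf_le hbdd hω) hcE
    · refine measure_mono_null (fun ω hω => ?_)
        (measure_iUnion_null (s := fun n : ℕ => {ω | c + 1/((n:ℝ)+1) ≤ T ω}) fun n => ?_)
      · have h1 : c ≤ T ω := csInf_le hbdd hω
        have h2 : c ≠ T ω := by
          intro h
          exact hcE (by rw [h]; exact hω)
        obtain ⟨n, hn⟩ := exists_nat_one_div_lt (sub_pos.mpr (lt_of_le_of_ne h1 h2))
        exact Set.mem_iUnion.2 ⟨n, by simp only [Set.mem_setOf_eq]; linarith⟩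
      · obtain ⟨e, heE, he⟩ := exists_lt_of_csInf_lt hEne
          (lt_add_of_pos_right c (by positivity : (0:ℝ) < 1/((n:ℝ)+1)))
        exact measure_mono_null (fun ω hω => le_trans he.le hω) heE

/-- Under independence of `(Z, T)` from `(W, C)`, `β = P(T ≥ W) > 0`,
positivity of `g` on `[t1, t2)`, `P(t1 ≤ T < t2) > 0` and `0 < q < 1`: if `m0` is a
`q`-th conditional quantile of the marker, i.e. `P(Z ≤ m0 | t1 ≤ T < t2) = q`, then the
population percentile estimating function vanishes at `m0`:
`E[(S(X)/G(X)) Δ 1{t1 ≤ X < t2} (1{Z ≤ m0} − q) | T ≥ W] = 0`. -/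
theorem percentile_estimating_function_unbiased
    {Ω : Type*} [MeasurableSpace Ω] (μ : Measure Ω) [IsProbabilityMeasure μ]
    (T C W Z : Ω → ℝ) (hT : Measurable T) (hC : Measurable C) (hW : Measurable W)
    (hZmeas : Measurable Z)
    (hindep : IndepFun (fun ω => (Z ω, T ω)) (fun ω => (W ω, C ω)) μ)
    (S g G : ℝ → ℝ)
    (hS : ∀ t, S t = (μ {ω | t ≤ T ω}).toReal)
    (hg : ∀ t, g t = (μ {ω | W ω ≤ t ∧ t ≤ C ω}).toReal)
    (hβ : 0 < (μ {ω | W ω ≤ T ω}).toReal)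
    (hG : ∀ t, G t = ((μ[|{ω | W ω ≤ T ω}]) {ω | t ≤ min (T ω) (C ω) ∧ W ω ≤ t}).toReal)
    (t1 t2 : ℝ) (h12 : t1 < t2) (hgpos : ∀ s ∈ Set.Ico t1 t2, 0 < g s)
    (hTpos : 0 < (μ {ω | t1 ≤ T ω ∧ T ω < t2}).toReal)
    (q : ℝ) (hq0 : 0 < q) (hq1 : q < 1) (m0 : ℝ)
    (hquant : ((μ[|{ω | t1 ≤ T ω ∧ T ω < t2}]) {ω | Z ω ≤ m0}).toReal = q) :
    ∫ ω, (S (min (T ω) (C ω)) / G (min (T ω) (C ω)))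
        * Set.indicator {ω' | T ω' ≤ C ω'} (fun _ => (1 : ℝ)) ω
        * Set.indicator {ω' | t1 ≤ min (T ω') (C ω') ∧ min (T ω') (C ω') < t2}
            (fun _ => (1 : ℝ)) ω
        * (Set.indicator {ω' | Z ω' ≤ m0} (fun _ => (1 : ℝ)) ω - q)
        ∂(μ[|{ω | W ω ≤ T ω}]) = 0 := by
  classical
  set A : Set Ω := {ω | W ω ≤ T ω} with hA
  have hA_meas : MeasurableSet A := measurableSet_le hW hT
  have hμA_ne0 : μ A ≠ 0 := by
    intro h
    rw [h] at hβ
    simp at hβ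
  set β' : ℝ := (μ A).toReal with hβ'def
  have hβ'pos : 0 < β' := hβ
  set B : Set Ω := {ω | t1 ≤ T ω ∧ T ω < t2} with hB
  have hB_meas : MeasurableSet B :=
    (measurableSet_le measurable_const hT).inter (measurableSet_lt hT measurable_const)
  have hμB_ne0 : (μ B).toReal ≠ 0 := ne_of_gt hTpos
  -- measurability of g
  have hmono1 : Monotone (fun t : ℝ => (μ {ω | W ω ≤ t}).toReal) := fun a b hab =>
    ENNReal.toReal_mono (measure_ne_top _ _) (measure_mono fun ω h => le_trans h hab)
  have hmono2 : Monotone (fun t : ℝ => (μ {ω | W ω ≤ t ∧ C ω < t}).toReal) := fun a b hab =>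
    ENNReal.toReal_mono (measure_ne_top _ _)
      (measure_mono fun ω h => ⟨le_trans h.1 hab, lt_of_lt_of_le h.2 hab⟩)
  have hg_meas : Measurable g := by
    have hsplit : g = fun t =>
        (μ {ω | W ω ≤ t}).toReal - (μ {ω | W ω ≤ t ∧ C ω < t}).toReal := by
      funext t
      have hdecomp : {ω | W ω ≤ t} = {ω | W ω ≤ t ∧ t ≤ C ω} ∪ {ω | W ω ≤ t ∧ C ω < t} := by
        ext ω
        simp only [Set.mem_setOf_eq, Set.mem_union]
        constructor
        · intro h
          rcases le_or_gt t (C ω) with h' | h'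
          · exact Or.inl ⟨h, h'⟩
          · exact Or.inr ⟨h, h'⟩
        · rintro (⟨h, _⟩ | ⟨h, _⟩) <;> exact h
      have hdisj : Disjoint {ω | W ω ≤ t ∧ t ≤ C ω} {ω | W ω ≤ t ∧ C ω < t} := by
        rw [Set.disjoint_left]
        rintro ω ⟨_, h1⟩ ⟨_, h2⟩
        exact absurd h1 (not_le.2 h2)
      have hm2 : MeasurableSet {ω | W ω ≤ t ∧ C ω < t} :=
        (measurableSet_le hW measurable_const).inter (measurableSet_lt hC measurable_const)
      rw [hg, hdecomp, measure_union hdisj hm2,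
        ENNReal.toReal_add (measure_ne_top _ _) (measure_ne_top _ _)]
      ring
    rw [hsplit]
    exact hmono1.measurable.sub hmono2.measurable
  have hg_nonneg : ∀ t, 0 ≤ g t := fun t => by rw [hg]; exact ENNReal.toReal_nonneg
  -- measurable pair maps
  have hΦ1 : Measurable (fun ω => (Z ω, T ω)) := hZmeas.prodMk hT
  have hΦ2 : Measurable (fun ω => (W ω, C ω)) := hW.prodMk hC
  -- the G formula
  have hGeq : ∀ t, G t = S t * g t / β' := by
    intro t
    have hu : MeasurableSet {p : ℝ × ℝ | p.1 ≤ t ∧ t ≤ p.2} :=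
      (measurableSet_le measurable_fst measurable_const).inter
        (measurableSet_le measurable_const measurable_snd)
    have hs : MeasurableSet (Set.univ ×ˢ Set.Ici t : Set (ℝ × ℝ)) :=
      MeasurableSet.univ.prod measurableSet_Ici
    have hkey := hindep.measure_inter_preimage_eq_mul _ _ hs hu
    have hset1 : (fun ω => (Z ω, T ω)) ⁻¹' (Set.univ ×ˢ Set.Ici t) = {ω | t ≤ T ω} := by
      ext ω; simp [Set.mem_prod]
    have hset2 : (fun ω => (W ω, C ω)) ⁻¹' {p : ℝ × ℝ | p.1 ≤ t ∧ t ≤ p.2}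
        = {ω | W ω ≤ t ∧ t ≤ C ω} := rfl
    rw [hset1, hset2] at hkey
    have hAint : A ∩ {ω | t ≤ min (T ω) (C ω) ∧ W ω ≤ t}
        = {ω | t ≤ T ω} ∩ {ω | W ω ≤ t ∧ t ≤ C ω} := by
      ext ω
      simp only [hA, Set.mem_inter_iff, Set.mem_setOf_eq, le_min_iff]
      constructor
      · rintro ⟨hWT, ⟨hT', hC'⟩, hWt⟩
        exact ⟨hT', hWt, hC'⟩
      · rintro ⟨hT', hWt, hC'⟩
        exact ⟨le_trans hWt hT', ⟨hT', hC'⟩, hWt⟩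
    rw [hG, ProbabilityTheory.cond_apply hA_meas, hAint, hkey,
      ENNReal.toReal_mul, ENNReal.toReal_mul, ENNReal.toReal_inv, ← hS, ← hg, ← hβ'def,
      div_eq_mul_inv]
    ring
  -- a.e. nonvanishing of S ∘ T
  have hae_ne : ∀ᵐ ω ∂μ, μ {ω' | T ω ≤ T ω'} ≠ 0 := by
    rw [ae_iff]
    simpa using null_of_selfIci μ T
  -- the functions on the product space
  set φ : ℝ × ℝ → ℝ := fun x =>
    (if t1 ≤ x.2 ∧ x.2 < t2 then β' / g x.2 else 0) * ((if x.1 ≤ m0 then (1:ℝ) else 0) - q)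
    with hφdef
  set h : (ℝ × ℝ) × ℝ × ℝ → ℝ := fun p =>
    φ p.1 * (if p.2.1 ≤ p.1.2 ∧ p.1.2 ≤ p.2.2 then (1:ℝ) else 0) with hhdef
  have hφ_meas : Measurable φ := by
    apply Measurable.mul
    · exact Measurable.ite
        ((measurableSet_le measurable_const measurable_snd).inter
          (measurableSet_lt measurable_snd measurable_const))
        (measurable_const.div (hg_meas.comp measurable_snd)) measurable_const
    · exact (Measurable.ite (measurableSet_le measurable_fst measurable_const)
        measurable_const measurable_const).sub measurable_const
  have hh_meas : Measurable h := by
    apply Measurable.mul (hφ_meas.comp measurable_fst)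
    exact Measurable.ite
      ((measurableSet_le (measurable_fst.comp measurable_snd)
          (measurable_snd.comp measurable_fst)).inter
        (measurableSet_le (measurable_snd.comp measurable_fst)
          (measurable_snd.comp measurable_snd)))
      measurable_const measurable_const
  -- reduce conditional integral to plain integral
  rw [ProbabilityTheory.cond, integral_smul_measure, ← integral_indicator hA_meas]
  have hae : A.indicator (fun ω =>
      (S (min (T ω) (C ω)) / G (min (T ω) (C ω)))
        * Set.indicator {ω' | T ω' ≤ C ω'} (fun _ => (1 : ℝ)) ω
        * Set.indicator {ω' | t1 ≤ min (T ω') (C ω') ∧ min (T ω') (C ω') < t2}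
            (fun _ => (1 : ℝ)) ω
        * (Set.indicator {ω' | Z ω' ≤ m0} (fun _ => (1 : ℝ)) ω - q))
      =ᵐ[μ] fun ω => h ((Z ω, T ω), (W ω, C ω)) := by
    filter_upwards [hae_ne] with ω hω
    have hSne : S (T ω) ≠ 0 := by
      rw [hS]
      exact ENNReal.toReal_ne_zero.mpr ⟨hω, measure_ne_top _ _⟩
    have rhs_eq : h ((Z ω, T ω), (W ω, C ω)) =
        (if t1 ≤ T ω ∧ T ω < t2 then β' / g (T ω) else 0)
          * ((if Z ω ≤ m0 then (1:ℝ) else 0) - q)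
          * (if W ω ≤ T ω ∧ T ω ≤ C ω then (1:ℝ) else 0) := rfl
    rw [rhs_eq]
    by_cases hWT : W ω ≤ T ω
    · rw [Set.indicator_of_mem (show ω ∈ A from hWT)]
      by_cases hTC : T ω ≤ C ω
      · have hmin : min (T ω) (C ω) = T ω := min_eq_left hTC
        rw [if_pos (show W ω ≤ T ω ∧ T ω ≤ C ω from ⟨hWT, hTC⟩), mul_one,
          Set.indicator_of_mem (show ω ∈ {ω' | T ω' ≤ C ω'} from hTC)]
        by_cases h12' : t1 ≤ T ω ∧ T ω < t2
        · rw [if_pos h12',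
            Set.indicator_of_mem (show ω ∈ {ω' | t1 ≤ min (T ω') (C ω')
              ∧ min (T ω') (C ω') < t2} from by rw [Set.mem_setOf_eq, hmin]; exact h12')]
          have hgne : g (T ω) ≠ 0 := ne_of_gt (hgpos _ h12')
          have hdiv : S (T ω) / G (T ω) = β' / g (T ω) := by
            rw [hGeq, div_div_eq_mul_div, mul_div_mul_left _ _ hSne]
          have hz : Set.indicator {ω' | Z ω' ≤ m0} (fun _ => (1:ℝ)) ω
              = if Z ω ≤ m0 then 1 else 0 := by
            simp [Set.indicator_apply]
          rw [hmin, hdiv, hz]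
          ring
        · rw [if_neg h12',
            Set.indicator_of_notMem (show ω ∉ {ω' | t1 ≤ min (T ω') (C ω')
              ∧ min (T ω') (C ω') < t2} from by rw [Set.mem_setOf_eq, hmin]; exact h12')]
          ring
      · rw [if_neg (show ¬(W ω ≤ T ω ∧ T ω ≤ C ω) from fun hcon => hTC hcon.2),
          Set.indicator_of_notMem (show ω ∉ {ω' | T ω' ≤ C ω'} from hTC)]
        ring
    · rw [Set.indicator_of_notMem (show ω ∉ A from hWT),
        if_neg (show ¬(W ω ≤ T ω ∧ T ω ≤ C ω) from fun hcon => hWT hcon.1)]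
      ring
  rw [integral_congr_ae hae]
  -- move to the product measure
  set P1 := μ.map (fun ω => (Z ω, T ω)) with hP1
  set P2 := μ.map (fun ω => (W ω, C ω)) with hP2
  haveI : IsProbabilityMeasure P1 := Measure.isProbabilityMeasure_map hΦ1.aemeasurable
  haveI : IsProbabilityMeasure P2 := Measure.isProbabilityMeasure_map hΦ2.aemeasurable
  have hmap : μ.map (fun ω => ((Z ω, T ω), (W ω, C ω))) = P1.prod P2 :=
    (indepFun_iff_map_prod_eq_prod_map_map hΦ1.aemeasurable hΦ2.aemeasurable).mp hindep
  have hΦ : Measurable (fun ω => ((Z ω, T ω), (W ω, C ω))) := hΦ1.prodMk hΦ2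
  have hstep : ∫ ω, h ((Z ω, T ω), (W ω, C ω)) ∂μ = ∫ p, h p ∂(P1.prod P2) := by
    rw [← hmap]
    exact (integral_map hΦ.aemeasurable hh_meas.aestronglyMeasurable).symm
  rw [hstep]
  -- inner integral computation
  have hu : ∀ t : ℝ, MeasurableSet {y : ℝ × ℝ | y.1 ≤ t ∧ t ≤ y.2} := fun t =>
    (measurableSet_le measurable_fst measurable_const).inter
      (measurableSet_le measurable_const measurable_snd)
  have hP2u : ∀ t : ℝ, (P2 {y : ℝ × ℝ | y.1 ≤ t ∧ t ≤ y.2}).toReal = g t := by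
    intro t
    rw [hP2, Measure.map_apply hΦ2 (hu t)]
    exact (hg t).symm
  have hsec : ∀ x : ℝ × ℝ, (fun y => h (x, y))
      = fun y => φ x * Set.indicator {y : ℝ × ℝ | y.1 ≤ x.2 ∧ x.2 ≤ y.2} (fun _ => (1:ℝ)) y := by
    intro x
    funext y
    simp [hhdef, Set.indicator_apply]
  have hinner : ∀ x : ℝ × ℝ, ∫ y, h (x, y) ∂P2 = φ x * g x.2 := by
    intro x
    rw [hsec x, integral_const_mul, integral_indicator_const (1:ℝ) (hu x.2), smul_eq_mul,
      mul_one, measureReal_def, hP2u]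
  -- the simplified integrand on P1
  set B2 : Set (ℝ × ℝ) := {x | t1 ≤ x.2 ∧ x.2 < t2} with hB2def
  set B1 : Set (ℝ × ℝ) := {x | (t1 ≤ x.2 ∧ x.2 < t2) ∧ x.1 ≤ m0} with hB1def
  have hB2m : MeasurableSet B2 :=
    (measurableSet_le measurable_const measurable_snd).inter
      (measurableSet_lt measurable_snd measurable_const)
  have hB1m : MeasurableSet B1 :=
    hB2m.inter (measurableSet_le measurable_fst measurable_const)
  set ρ : ℝ × ℝ → ℝ := fun x => β' * Set.indicator B1 (fun _ => (1:ℝ)) x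
      - β' * q * Set.indicator B2 (fun _ => (1:ℝ)) x with hρdef
  have hρint : Integrable ρ P1 :=
    (((integrable_const (1:ℝ)).indicator hB1m).const_mul β').sub
      (((integrable_const (1:ℝ)).indicator hB2m).const_mul (β' * q))
  have hφg_eq_ρ : ∀ x : ℝ × ℝ, φ x * g x.2 = ρ x := by
    intro x
    by_cases h' : t1 ≤ x.2 ∧ x.2 < t2
    · have hgne : g x.2 ≠ 0 := ne_of_gt (hgpos x.2 h')
      by_cases hz : x.1 ≤ m0
      · rw [hρdef]
        simp only [hφdef, hB1def, hB2def, Set.indicator_apply, Set.mem_setOf_eq, h', hz,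
          if_true, and_true, and_self, if_pos]
        field_simp
      · rw [hρdef]
        simp only [hφdef, hB1def, hB2def, Set.indicator_apply, Set.mem_setOf_eq, h', hz,
          if_true, and_false, if_false]
        simp only [and_self, if_true]
        rw [mul_right_comm, div_mul_cancel₀ _ hgne]
        ring
    · rw [hρdef]
      simp only [hφdef, hB1def, hB2def, Set.indicator_apply, Set.mem_setOf_eq, h',
        if_false, false_and, and_false]
      simp [h']
  -- integrability of h on the product
  have hint : Integrable h (P1.prod P2) := by
    rw [integrable_prod_iff hh_meas.aestronglyMeasurable]
    constructor
    · refine Filter.Eventually.of_forall fun x => ?_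
      rw [hsec x]
      exact ((integrable_const (1:ℝ)).indicator (hu x.2)).const_mul _
    · have heq : (fun x : ℝ × ℝ => ∫ y, ‖h (x, y)‖ ∂P2) = fun x => |ρ x| := by
        funext x
        have habs : (fun y : ℝ × ℝ => ‖h (x, y)‖)
            = fun y => |φ x| * Set.indicator {y : ℝ × ℝ | y.1 ≤ x.2 ∧ x.2 ≤ y.2}
                (fun _ => (1:ℝ)) y := by
          funext y
          simp only [hhdef, Real.norm_eq_abs, abs_mul, Set.indicator_apply]
          by_cases hy : y.1 ≤ x.2 ∧ x.2 ≤ y.2 <;> simp [hy]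
        rw [habs, integral_const_mul, integral_indicator_const (1:ℝ) (hu x.2), smul_eq_mul,
          mul_one, measureReal_def, hP2u, ← hφg_eq_ρ x, abs_mul (φ x) (g x.2),
          abs_of_nonneg (hg_nonneg x.2)]
      rw [heq]
      exact hρint.abs
  rw [MeasureTheory.integral_prod h hint]
  have hmid : ∫ x, (∫ y, h (x, y) ∂P2) ∂P1 = ∫ x, ρ x ∂P1 := by
    refine integral_congr_ae (Filter.Eventually.of_forall fun x => ?_)
    show ∫ y, h (x, y) ∂P2 = ρ x
    rw [hinner x, hφg_eq_ρ x]
  rw [hmid]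
  -- final computation
  have hval : ∫ x, ρ x ∂P1 = β' * (P1 B1).toReal - β' * q * (P1 B2).toReal := by
    rw [hρdef]
    rw [integral_sub (((integrable_const (1:ℝ)).indicator hB1m).const_mul β')
      (((integrable_const (1:ℝ)).indicator hB2m).const_mul (β' * q)),
      integral_const_mul, integral_const_mul,
      integral_indicator_const (1:ℝ) hB1m, integral_indicator_const (1:ℝ) hB2m]
    simp [smul_eq_mul, measureReal_def]
  rw [hval]
  have hpre2 : (fun ω => (Z ω, T ω)) ⁻¹' B2 = B := rfl
  have hpre1 : (fun ω => (Z ω, T ω)) ⁻¹' B1 = B ∩ {ω | Z ω ≤ m0} := rfl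
  have hP1B2 : (P1 B2).toReal = (μ B).toReal := by
    rw [hP1, Measure.map_apply hΦ1 hB2m, hpre2]
  have hP1B1 : (P1 B1).toReal = q * (μ B).toReal := by
    rw [hP1, Measure.map_apply hΦ1 hB1m, hpre1]
    rw [ProbabilityTheory.cond_apply hB_meas, ENNReal.toReal_mul, ENNReal.toReal_inv] at hquant
    have := hquant
    field_simp at this
    linarith [this]
  rw [hP1B1, hP1B2]
  have : β' * (q * (μ B).toReal) - β' * q * (μ B).toReal = 0 := by ring
  rw [this, smul_zero]
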